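/- For $0 < \alpha < 1$, $\int_{\{(p,q): p > 0, q > 0\}} \frac{pq}{(p + q + \delta pq)^{\alpha+2}}\, dp\, dq = \frac{1-\alpha}{\alpha(\alpha+1)\,\delta^{2-\alpha}} \cdot \frac{\pi}{\sin(\pi\alpha)}$ for every $\delta > 0$. -/

import Mathlib

open Real MeasureTheory

open Set in
private lemma betaIoo_integrable {a b : ℝ} (ha : 0 < a) (hb : 0 < b) :
    IntegrableOn (fun x : ℝ => x ^ (a - 1) * (1 - x) ^ (b - 1)) (Ioo 0 1) := by
  have h := Complex.betaIntegral_convergent (u := (a : ℂ)) (v := (b : ℂ)) (by simpa using ha)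
    (by simpa using hb)
  rw [intervalIntegrable_iff_integrableOn_Ioc_of_le zero_le_one] at h
  have h' : IntegrableOn (fun x : ℝ => ((x:ℂ) ^ ((a:ℂ)-1) * ((1:ℂ)-x) ^ ((b:ℂ)-1))) (Ioo 0 1) :=
    h.mono_set Ioo_subset_Ioc_self
  refine (h'.re).congr ?_
  filter_upwards [ae_restrict_mem measurableSet_Ioo] with x hx
  obtain ⟨hx0, hx1⟩ := hx
  have e1 : ((x:ℂ)) ^ ((a:ℂ)-1) = ((x ^ (a-1) : ℝ) : ℂ) := by
    rw [Complex.ofReal_cpow hx0.le]; push_cast; ring_nf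
  have e2 : ((1:ℂ)-(x:ℂ)) ^ ((b:ℂ)-1) = (((1-x) ^ (b-1) : ℝ) : ℂ) := by
    rw [Complex.ofReal_cpow (by linarith)]; push_cast; ring_nf
  simp [e1, e2, ← Complex.ofReal_mul]

open Set in
private lemma betaIoo_value {a b : ℝ} (ha : 0 < a) (hb : 0 < b) :
    ∫ x in Ioo (0:ℝ) 1, x ^ (a - 1) * (1 - x) ^ (b - 1)
      = Real.Gamma a * Real.Gamma b / Real.Gamma (a + b) := by
  have hbeta : Complex.betaIntegral a b
      = ((∫ x in Ioo (0:ℝ) 1, x ^ (a - 1) * (1 - x) ^ (b - 1) : ℝ) : ℂ) := by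
    rw [Complex.betaIntegral]
    have : ∀ x ∈ uIcc (0:ℝ) 1,
        ((x:ℂ)) ^ ((a:ℂ)-1) * ((1:ℂ)-x) ^ ((b:ℂ)-1)
          = ((x ^ (a-1) * (1-x) ^ (b-1) : ℝ) : ℂ) := by
      intro x hx
      rw [uIcc_of_le zero_le_one] at hx
      rw [Complex.ofReal_mul, Complex.ofReal_cpow hx.1, Complex.ofReal_cpow (by linarith [hx.2])]
      push_cast; ring_nf
    rw [intervalIntegral.integral_congr this, intervalIntegral.integral_ofReal,
      intervalIntegral.integral_of_le zero_le_one, setIntegral_congr_set Ioo_ae_eq_Ioc]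
  have key := Complex.Gamma_mul_Gamma_eq_betaIntegral (s := (a:ℂ)) (t := (b:ℂ))
    (by simpa using ha) (by simpa using hb)
  rw [hbeta] at key
  have : ((Real.Gamma a * Real.Gamma b : ℝ) : ℂ)
      = ((Real.Gamma (a+b) * ∫ x in Ioo (0:ℝ) 1, x ^ (a - 1) * (1 - x) ^ (b - 1) : ℝ) : ℂ) := by
    push_cast
    rw [← Complex.Gamma_ofReal, ← Complex.Gamma_ofReal, ← Complex.Gamma_ofReal] at *
    push_cast at key ⊢
    exact key
  rw [Complex.ofReal_inj] at this
  have hG : Real.Gamma (a+b) ≠ 0 := (Real.Gamma_pos_of_pos (by linarith)).ne'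
  field_simp [this]
  rw [this]; ring

section subst
open Set
variable {a b : ℝ}

private lemma subst_deriv : ∀ t ∈ Ioo (0:ℝ) 1,
    HasDerivWithinAt (fun t : ℝ => t / (1 - t)) (((1-t)^2)⁻¹) (Ioo 0 1) t := by
  intro t ht
  have h1 : (1 : ℝ) - t ≠ 0 := by have := ht.2; intro h; linarith [sub_eq_zero.mp h]
  have := (hasDerivAt_id t).div ((hasDerivAt_const t (1:ℝ)).sub (hasDerivAt_id t)) h1
  convert this.hasDerivWithinAt using 1
  · rfl
  · rfl
  · rfl
  · simp only [Pi.sub_apply, id]; ring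

private lemma subst_inj : InjOn (fun t : ℝ => t / (1 - t)) (Ioo 0 1) := by
  intro t ht u hu h
  have h1 : (1 : ℝ) - t ≠ 0 := by have := ht.2; intro h; linarith [sub_eq_zero.mp h]
  have h2 : (1 : ℝ) - u ≠ 0 := by have := hu.2; intro h; linarith [sub_eq_zero.mp h]
  field_simp at h
  linarith

private lemma subst_image : (fun t : ℝ => t / (1 - t)) '' (Ioo 0 1) = Ioi 0 := by
  ext y
  constructor
  · rintro ⟨t, ht, rfl⟩
    exact div_pos ht.1 (by linarith [ht.2])
  · intro hy
    refine ⟨y / (1 + y), ⟨div_pos hy (by linarith [mem_Ioi.mp hy]), ?_⟩, ?_⟩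
    · rw [div_lt_one (by linarith [mem_Ioi.mp hy])]; linarith [mem_Ioi.mp hy]
    · have hy' : (0:ℝ) < y := hy
      field_simp
      ring

private lemma subst_pointwise (ha : 0 < a) (hb : 0 < b) {t : ℝ} (ht : t ∈ Ioo (0:ℝ) 1) :
    |((1-t)^2)⁻¹| • ((t / (1-t)) ^ (a-1) * (1 + t/(1-t)) ^ (-(a+b)))
      = t ^ (a - 1) * (1 - t) ^ (b - 1) := by
  obtain ⟨ht0, ht1⟩ := ht
  have h1 : (0:ℝ) < 1 - t := by linarith
  have e1 : (1 : ℝ) + t / (1 - t) = (1 - t)⁻¹ := by field_simp; ring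
  have e2 : (t / (1 - t)) ^ (a - 1) = t ^ (a-1) * ((1-t) ^ (a-1))⁻¹ := by
    rw [Real.div_rpow ht0.le h1.le, div_eq_mul_inv]
  have e3 : ((1 - t)⁻¹ : ℝ) ^ (-(a+b)) = (1-t) ^ (a+b) := by
    rw [Real.inv_rpow h1.le, Real.rpow_neg h1.le, inv_inv]
  rw [e1, e2, e3, smul_eq_mul, abs_inv, abs_of_pos (by positivity),
    ← Real.rpow_natCast (1-t) 2, ← Real.rpow_neg h1.le, ← Real.rpow_neg h1.le]
  push_cast
  have hh : ((1-t):ℝ)^(-(2:ℝ)) * ((1-t)^(-(a-1)) * (1-t)^(a+b)) = (1-t)^(b-1) := by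
    rw [← Real.rpow_add h1, ← Real.rpow_add h1,
      show (-(2:ℝ) + (-(a-1)+(a+b))) = b-1 by ring]
  linear_combination t ^ (a-1) * hh

private lemma betaIoi_eq (ha : 0 < a) (hb : 0 < b) :
    ∫ x in Ioi (0:ℝ), x ^ (a - 1) * (1 + x) ^ (-(a + b))
      = Real.Gamma a * Real.Gamma b / Real.Gamma (a + b) := by
  rw [← subst_image, integral_image_eq_integral_abs_deriv_smul measurableSet_Ioo
    subst_deriv subst_inj, ← betaIoo_value ha hb]
  exact setIntegral_congr_fun measurableSet_Ioo (fun t ht => subst_pointwise ha hb ht)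

private lemma betaIoi_integrable (ha : 0 < a) (hb : 0 < b) :
    IntegrableOn (fun x : ℝ => x ^ (a - 1) * (1 + x) ^ (-(a + b))) (Ioi 0) := by
  rw [← subst_image, integrableOn_image_iff_integrableOn_abs_deriv_smul measurableSet_Ioo
    subst_deriv subst_inj]
  exact (betaIoo_integrable ha hb).congr_fun
    (fun t ht => (subst_pointwise ha hb ht).symm) measurableSet_Ioo

end subst

section scale
open Set
variable {c : ℝ} (hc : 0 < c)
include hc

private lemma scale_image : (fun x : ℝ => c * x) '' (Ioi 0) = Ioi 0 := by
  ext y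
  constructor
  · rintro ⟨x, hx, rfl⟩; exact mul_pos hc hx
  · intro hy; exact ⟨y / c, div_pos hy hc, by field_simp⟩

private lemma scale_deriv : ∀ x ∈ Ioi (0:ℝ), HasDerivWithinAt (fun x : ℝ => c * x) c (Ioi 0) x := by
  intro x _
  simpa using ((hasDerivAt_id x).const_mul c).hasDerivWithinAt

private lemma scale_inj : InjOn (fun x : ℝ => c * x) (Ioi 0) :=
  fun x _ y _ h => by simpa [hc.ne'] using h

private lemma integral_scale_Ioi (g : ℝ → ℝ) :
    ∫ x in Ioi (0:ℝ), g x = c * ∫ x in Ioi (0:ℝ), g (c * x) := by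
  conv_lhs => rw [← scale_image hc]
  rw [integral_image_eq_integral_abs_deriv_smul measurableSet_Ioi (scale_deriv hc) (scale_inj hc)]
  simp [abs_of_pos hc, integral_smul, smul_eq_mul]
  rw [← integral_const_mul]

private lemma integrableOn_scale_Ioi {g : ℝ → ℝ} (hg : IntegrableOn g (Ioi 0)) :
    IntegrableOn (fun x => g (c * x)) (Ioi 0) := by
  have := (integrableOn_image_iff_integrableOn_abs_deriv_smul measurableSet_Ioi
    (scale_deriv hc) (scale_inj hc) g).mp (by rwa [scale_image hc])
  have h2 := this.const_mul c⁻¹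
  refine h2.congr ?_
  filter_upwards with x
  simp [abs_of_pos hc, smul_eq_mul]
  field_simp
end scale

section pieces
open Set
variable {α δ p : ℝ}

private lemma J_eq (hα0 : 0 < α) :
    ∫ x in Ioi (0:ℝ), x * (1 + x) ^ (-(α+2)) = 1 / (α * (α+1)) := by
  have h := betaIoi_eq (a := 2) (b := α) two_pos hα0
  have e : ∀ x ∈ Ioi (0:ℝ), x ^ ((2:ℝ) - 1) * (1 + x) ^ (-((2:ℝ) + α))
      = x * (1 + x) ^ (-(α+2)) := by
    intro x hx
    rw [show (2:ℝ) - 1 = 1 by norm_num, Real.rpow_one, show -((2:ℝ)+α) = -(α+2) by ring]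
  rw [setIntegral_congr_fun measurableSet_Ioi e] at h
  rw [h]
  have hα1 : α + 1 ≠ 0 := by positivity
  have hΓ : Real.Gamma ((2:ℝ) + α) = (α+1) * α * Real.Gamma α := by
    rw [show (2:ℝ) + α = (α + 1) + 1 by ring, Real.Gamma_add_one hα1,
      Real.Gamma_add_one hα0.ne']
    ring
  rw [hΓ, Real.Gamma_two]
  have hΓα : Real.Gamma α ≠ 0 := (Real.Gamma_pos_of_pos hα0).ne'
  field_simp

private lemma J_int (hα0 : 0 < α) :
    IntegrableOn (fun x : ℝ => x * (1 + x) ^ (-(α+2))) (Ioi 0) := by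
  have h := betaIoi_integrable (a := 2) (b := α) two_pos hα0
  refine h.congr_fun (fun x hx => ?_) measurableSet_Ioi
  dsimp only
  rw [show (2:ℝ) - 1 = 1 by norm_num, Real.rpow_one, show -((2:ℝ)+α) = -(α+2) by ring]

private lemma L_eq (hα0 : 0 < α) (hα1 : α < 1) :
    ∫ x in Ioi (0:ℝ), x ^ (1-α) * ((1 + x) ^ (2:ℕ))⁻¹
      = (1 - α) * (π / Real.sin (π * α)) := by
  have h := betaIoi_eq (a := 2 - α) (b := α) (by linarith) hα0
  have e : ∀ x ∈ Ioi (0:ℝ), x ^ ((2:ℝ) - α - 1) * (1 + x) ^ (-((2:ℝ) - α + α))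
      = x ^ (1-α) * ((1 + x) ^ (2:ℕ))⁻¹ := by
    intro x hx
    have h1 : (0:ℝ) < 1 + x := by have := mem_Ioi.mp hx; linarith
    rw [show (2:ℝ) - α - 1 = 1 - α by ring, show -((2:ℝ) - α + α) = -(2:ℝ) by ring,
      show ((2:ℝ)) = ((2:ℕ):ℝ) by norm_num, Real.rpow_neg h1.le, Real.rpow_natCast]
  rw [setIntegral_congr_fun measurableSet_Ioi e] at h
  rw [h, show (2:ℝ) - α = (1 - α) + 1 by ring, Real.Gamma_add_one (by linarith : (1:ℝ) - α ≠ 0),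
    show (1:ℝ) - α + 1 + α = 2 by ring, Real.Gamma_two]
  rw [div_one, mul_assoc, mul_comm (Real.Gamma (1-α)), Real.Gamma_mul_Gamma_one_sub]

private lemma L_int (hα0 : 0 < α) (hα1 : α < 1) :
    IntegrableOn (fun x : ℝ => x ^ (1-α) * ((1 + x) ^ (2:ℕ))⁻¹) (Ioi 0) := by
  have h := betaIoi_integrable (a := 2 - α) (b := α) (by linarith) hα0
  refine h.congr_fun (fun x hx => ?_) measurableSet_Ioi
  have h1 : (0:ℝ) < 1 + x := by have := mem_Ioi.mp hx; linarith
  dsimp only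
  rw [show (2:ℝ) - α - 1 = 1 - α by ring, show -((2:ℝ) - α + α) = -(2:ℝ) by ring,
    show ((2:ℝ)) = ((2:ℕ):ℝ) by norm_num, Real.rpow_neg h1.le, Real.rpow_natCast]

private lemma inner_congr (hδ : 0 < δ) (hp : 0 < p) :
    ∀ q ∈ Ioi (0:ℝ), p * q / (p + q + δ*p*q) ^ (α+2)
      = p * (q * (p + (1+δ*p) * q) ^ (-(α+2))) := by
  intro q hq
  have hq0 : (0:ℝ) < q := hq
  have hpos : 0 < p + (1+δ*p)*q := by
    nlinarith [mul_pos (by nlinarith : (0:ℝ) < 1+δ*p) hq0]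
  rw [Real.rpow_neg hpos.le, show p + q + δ*p*q = p + (1+δ*p)*q by ring]
  ring

private lemma inner_eq (hα0 : 0 < α) (hδ : 0 < δ) (hp : 0 < p) :
    ∫ q in Ioi (0:ℝ), p * q / (p + q + δ*p*q) ^ (α+2)
      = p ^ (1-α) * ((1 + δ*p) ^ (2:ℕ))⁻¹ * (1 / (α * (α+1))) := by
  set c : ℝ := 1 + δ*p with hcdef
  have hc : 0 < c := by positivity
  set k : ℝ := p / c with hkdef
  have hk : 0 < k := div_pos hp hc
  rw [setIntegral_congr_fun measurableSet_Ioi (inner_congr hδ hp), integral_const_mul,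
    integral_scale_Ioi hk (fun q => q * (p + c * q) ^ (-(α+2)))]
  have e2 : ∀ x ∈ Ioi (0:ℝ), (k*x) * (p + c*(k*x)) ^ (-(α+2))
      = (k * p ^ (-(α+2))) * (x * (1+x) ^ (-(α+2))) := by
    intro x hx
    have hx0 : (0:ℝ) < x := hx
    have hck : c * k = p := by rw [hkdef]; field_simp
    have : p + c*(k*x) = p * (1+x) := by rw [← mul_assoc, hck]; ring
    rw [this, Real.mul_rpow hp.le (by linarith)]
    ring
  rw [setIntegral_congr_fun measurableSet_Ioi e2, integral_const_mul, J_eq hα0]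
  have e3 : p ^ (1-α) = p^(3:ℕ) * p ^ (-(α+2)) := by
    rw [← Real.rpow_natCast p 3, ← Real.rpow_add hp]
    congr 1
    push_cast
    ring
  rw [e3]
  field_simp [hkdef]
  rw [← mul_pow, hkdef, div_mul_cancel₀ p hc.ne']

private lemma inner_int (hα0 : 0 < α) (hδ : 0 < δ) (hp : 0 < p) :
    IntegrableOn (fun q => p * q / (p + q + δ*p*q) ^ (α+2)) (Ioi 0) := by
  set c : ℝ := 1 + δ*p with hcdef
  have hc : 0 < c := by positivity
  set k : ℝ := p / c with hkdef
  have hk : 0 < k := div_pos hp hc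
  have base : IntegrableOn (fun x : ℝ => (k*x) * (p + c*(k*x)) ^ (-(α+2))) (Ioi 0) := by
    have hJ : IntegrableOn (fun x : ℝ => (k * p ^ (-(α+2))) * (x * (1+x) ^ (-(α+2)))) (Ioi 0) :=
      (J_int hα0).const_mul (k * p ^ (-(α+2)))
    refine (IntegrableOn.congr_fun hJ (fun x hx => ?_) measurableSet_Ioi)
    have hx0 : (0:ℝ) < x := hx
    have hck : c * k = p := by rw [hkdef]; field_simp
    have : p + c*(k*x) = p * (1+x) := by rw [← mul_assoc, hck]; ring
    rw [this, Real.mul_rpow hp.le (by linarith)]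
    ring
  have base2 : IntegrableOn (fun q : ℝ => q * (p + c*q) ^ (-(α+2))) (Ioi 0) := by
    have h := integrableOn_scale_Ioi (inv_pos.mpr hk)
      (g := fun x : ℝ => (k*x) * (p + c*(k*x)) ^ (-(α+2))) base
    refine (IntegrableOn.congr_fun h (fun q hq => ?_) measurableSet_Ioi)
    have : k * (k⁻¹ * q) = q := by field_simp
    simp only [this]
  have final : IntegrableOn (fun q : ℝ => p * (q * (p + c*q) ^ (-(α+2)))) (Ioi 0) :=
    base2.const_mul p
  exact final.congr_fun (fun q hq => (inner_congr hδ hp q hq).symm) measurableSet_Ioi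

private lemma outer_eq (hα0 : 0 < α) (hα1 : α < 1) (hδ : 0 < δ) :
    ∫ p in Ioi (0:ℝ), p ^ (1-α) * ((1 + δ*p) ^ (2:ℕ))⁻¹
      = (δ ^ (2-α))⁻¹ * ((1 - α) * (π / Real.sin (π * α))) := by
  rw [integral_scale_Ioi (inv_pos.mpr hδ) (fun p => p ^ (1-α) * ((1 + δ*p) ^ (2:ℕ))⁻¹)]
  have e : ∀ x ∈ Ioi (0:ℝ), (δ⁻¹*x) ^ (1-α) * ((1 + δ*(δ⁻¹*x)) ^ (2:ℕ))⁻¹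
      = (δ⁻¹) ^ (1-α) * (x ^ (1-α) * ((1 + x) ^ (2:ℕ))⁻¹) := by
    intro x hx
    have hx0 : (0:ℝ) < x := hx
    have : δ*(δ⁻¹*x) = x := by field_simp
    rw [this, Real.mul_rpow (by positivity) hx0.le]
    ring
  rw [setIntegral_congr_fun measurableSet_Ioi e, integral_const_mul, L_eq hα0 hα1]
  have : δ⁻¹ * (δ⁻¹) ^ (1-α) = (δ ^ (2-α))⁻¹ := by
    rw [Real.inv_rpow hδ.le, ← Real.rpow_neg_one δ, ← Real.rpow_neg hδ.le,
      ← Real.rpow_add hδ, ← Real.rpow_neg hδ.le]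
    norm_num
    ring_nf
  rw [← mul_assoc, this]

private lemma outer_int (hα0 : 0 < α) (hα1 : α < 1) (hδ : 0 < δ) :
    IntegrableOn (fun p : ℝ => p ^ (1-α) * ((1 + δ*p) ^ (2:ℕ))⁻¹) (Ioi 0) := by
  have h := integrableOn_scale_Ioi hδ (L_int hα0 hα1)
  have h2 : IntegrableOn (fun x : ℝ => (δ ^ (1-α))⁻¹ * ((δ*x) ^ (1-α) * ((1 + δ*x) ^ (2:ℕ))⁻¹))
      (Ioi 0) := h.const_mul _
  refine h2.congr_fun (fun x hx => ?_) measurableSet_Ioi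
  have hx0 : (0:ℝ) < x := hx
  dsimp only
  rw [Real.mul_rpow hδ.le hx0.le]
  have : δ ^ (1-α) ≠ 0 := by positivity
  field_simp

end pieces

open Set in
/-- For `0 < α < 1` and `δ > 0`:
`∬_{p,q>0} pq/(p+q+δpq)^{α+2} dp dq = (1-α)/(α(α+1)δ^{2-α}) ⬝ π/sin(πα)`. -/
theorem double_integral_pq (α δ : ℝ) (hα0 : 0 < α) (hα1 : α < 1) (hδ : 0 < δ) :
    ∫ pq in Set.Ioi (0 : ℝ) ×ˢ Set.Ioi (0 : ℝ),
        pq.1 * pq.2 / (pq.1 + pq.2 + δ * pq.1 * pq.2) ^ (α + 2)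
      = (1 - α) / (α * (α + 1) * δ ^ (2 - α)) * (π / Real.sin (π * α)) := by
  set f : ℝ × ℝ → ℝ := fun pq => pq.1 * pq.2 / (pq.1 + pq.2 + δ * pq.1 * pq.2) ^ (α + 2)
    with hf
  set μ : Measure ℝ := volume.restrict (Ioi 0) with hμ
  have hmeas : AEStronglyMeasurable f (μ.prod μ) := by
    apply Measurable.aestronglyMeasurable
    rw [hf]
    fun_prop
  have hval : ∀ p ∈ Ioi (0:ℝ), ∫ q, f (p, q) ∂μ
      = p ^ (1-α) * ((1 + δ*p) ^ (2:ℕ))⁻¹ * (1 / (α * (α+1))) := fun p hp =>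
    inner_eq hα0 hδ hp
  have hnonneg : ∀ p ∈ Ioi (0:ℝ), ∀ q ∈ Ioi (0:ℝ), 0 ≤ f (p, q) := by
    intro p hp q hq
    have hp0 : (0:ℝ) < p := hp
    have hq0 : (0:ℝ) < q := hq
    have hb : (0:ℝ) < p + q + δ*p*q := by positivity
    have := Real.rpow_pos_of_pos hb (α+2)
    positivity
  have hInt : Integrable f (μ.prod μ) := by
    rw [integrable_prod_iff hmeas]
    constructor
    · rw [hμ]
      refine (ae_restrict_iff' measurableSet_Ioi).mpr (ae_of_all _ fun p hp => ?_)
      exact inner_int hα0 hδ hp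
    · have houter : IntegrableOn
          (fun p : ℝ => p ^ (1-α) * ((1 + δ*p) ^ (2:ℕ))⁻¹ * (1 / (α * (α+1)))) (Ioi 0) :=
        (outer_int hα0 hα1 hδ).mul_const _
      refine houter.congr ?_
      rw [hμ]
      refine (ae_restrict_iff' measurableSet_Ioi).mpr (ae_of_all _ fun p hp => ?_)
      show p ^ (1-α) * ((1 + δ*p) ^ (2:ℕ))⁻¹ * (1 / (α * (α+1))) = ∫ q, ‖f (p, q)‖ ∂μ
      rw [← hval p hp]
      refine (integral_congr_ae ?_).symm
      rw [hμ]
      refine (ae_restrict_iff' measurableSet_Ioi).mpr (ae_of_all _ fun q hq => ?_)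
      exact Real.norm_of_nonneg (hnonneg p hp q hq)
  have hprod : (volume : Measure (ℝ × ℝ)).restrict (Ioi 0 ×ˢ Ioi 0) = μ.prod μ := by
    rw [hμ, Measure.prod_restrict, ← Measure.volume_eq_prod, Measure.restrict_congr_set]
    rfl
  rw [show (∫ pq in Set.Ioi (0:ℝ) ×ˢ Set.Ioi (0:ℝ), f pq) = ∫ pq, f pq ∂(μ.prod μ) by
    rw [← hprod]]
  rw [integral_prod f hInt]
  have step : ∫ p, (∫ q, f (p, q) ∂μ) ∂μ
      = ∫ p in Ioi (0:ℝ), p ^ (1-α) * ((1 + δ*p) ^ (2:ℕ))⁻¹ * (1 / (α * (α+1))) := by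
    rw [hμ]
    refine integral_congr_ae ((ae_restrict_iff' measurableSet_Ioi).mpr (ae_of_all _ ?_))
    intro p hp
    exact hval p hp
  rw [step, integral_mul_const, outer_eq hα0 hα1 hδ]
  have hs : Real.sin (π * α) ≠ 0 :=
    (Real.sin_pos_of_pos_of_lt_pi (by positivity)
      (by nlinarith [Real.pi_pos] : π * α < π)).ne'
  have hd : δ ^ ((2:ℝ)-α) ≠ 0 := by positivity
  have hα1' : α + 1 ≠ 0 := by positivity
  field_simp
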